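/- Let m ≥ 2 and let Ω be a nonempty open convex subset of ℝ^m with finite Lebesgue measure |Ω| and inradius ρ(Ω). Then Ω is bounded and its diameter satisfies diam(Ω) ≤ 2·m·ω_{m-1}^{-1}·ρ(Ω)^{1-m}·|Ω|. -/

import Mathlib

open MeasureTheory Metric
open scoped RealInnerProductSpace

/-- The inradius of a subset of Euclidean space: the supremum of radii of open balls
contained in the set. -/
noncomputable def inradius {m : ℕ} (A : Set (EuclideanSpace ℝ (Fin m))) : ℝ :=
  sSup {r : ℝ | 0 < r ∧ ∃ x, ball x r ⊆ A}

lemma stdCone_volume (k : ℕ) {r h : ℝ} (hr : 0 < r) (hh : 0 < h) :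
    volume {q : EuclideanSpace ℝ (Fin (k+1)) |
        q 0 ∈ Set.Ioo 0 h ∧ ‖q - q 0 • EuclideanSpace.single 0 1‖ < r * (1 - q 0 / h)} =
      ENNReal.ofReal (r ^ k * h / (k+1)) *
        volume (ball (0 : EuclideanSpace ℝ (Fin k)) 1) := by
  set ω := volume (ball (0 : EuclideanSpace ℝ (Fin k)) 1) with hω
  set S : Set (ℝ × (Fin k → ℝ)) :=
    {z | z.1 ∈ Set.Ioo 0 h ∧
      ‖(MeasurableEquiv.toLp 2 (Fin k → ℝ)).symm.symm z.2‖ < r * (1 - z.1 / h)} with hSdef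
  have hSmeas : MeasurableSet S := by
    have h1 : MeasurableSet {z : ℝ × (Fin k → ℝ) | z.1 ∈ Set.Ioo 0 h} :=
      measurable_fst measurableSet_Ioo
    have h2 : MeasurableSet {z : ℝ × (Fin k → ℝ) |
        ‖(MeasurableEquiv.toLp 2 (Fin k → ℝ)).symm.symm z.2‖ < r * (1 - z.1 / h)} :=
      measurableSet_lt
        ((((MeasurableEquiv.toLp 2 (Fin k → ℝ)).symm.symm.measurable).comp measurable_snd).norm)
        (((measurable_fst.div_const h).const_sub 1).const_mul r)
    exact h1.inter h2
  have hnorm : ∀ q : EuclideanSpace ℝ (Fin (k+1)),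
      ‖(MeasurableEquiv.toLp 2 (Fin k → ℝ)).symm.symm (fun j => q j.succ)‖
        = ‖q - q 0 • EuclideanSpace.single 0 1‖ := by
    intro q
    rw [EuclideanSpace.norm_eq, EuclideanSpace.norm_eq]
    congr 1
    rw [Fin.sum_univ_succ]
    simp [EuclideanSpace.single_apply, Fin.succ_ne_zero]
  have hpre : {q : EuclideanSpace ℝ (Fin (k+1)) |
        q 0 ∈ Set.Ioo 0 h ∧ ‖q - q 0 • EuclideanSpace.single 0 1‖ < r * (1 - q 0 / h)}
      = ((MeasurableEquiv.piFinSuccAbove (fun _ : Fin (k+1) => ℝ) 0)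
          ∘ (MeasurableEquiv.toLp 2 (Fin (k+1) → ℝ)).symm) ⁻¹' S := by
    ext q
    have e1 : ((MeasurableEquiv.piFinSuccAbove (fun _ : Fin (k+1) => ℝ) 0)
      ((MeasurableEquiv.toLp 2 (Fin (k+1) → ℝ)).symm q)).1 = q 0 := rfl
    have e2 : ((MeasurableEquiv.piFinSuccAbove (fun _ : Fin (k+1) => ℝ) 0)
      ((MeasurableEquiv.toLp 2 (Fin (k+1) → ℝ)).symm q)).2 = fun j => q j.succ := rfl
    simp only [Set.mem_preimage, Function.comp_apply, hSdef, Set.mem_setOf_eq, e1, e2,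
      hnorm q]
  rw [hpre, MeasurePreserving.measure_preimage
    ((volume_preserving_piFinSuccAbove (fun _ : Fin (k+1) => ℝ) 0).comp
      (EuclideanSpace.volume_preserving_symm_measurableEquiv_toLp (Fin (k+1))))
    hSmeas.nullMeasurableSet]
  rw [Measure.volume_eq_prod, Measure.prod_apply hSmeas]
  have hslice : ∀ t : ℝ, volume (Prod.mk t ⁻¹' S)
      = (Set.Ioo 0 h).indicator (fun t => ENNReal.ofReal ((r*(1-t/h))^k) * ω) t := by
    intro t
    by_cases ht : t ∈ Set.Ioo 0 h
    · have hRpos : 0 < r * (1 - t/h) := by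
        have := (div_lt_one hh).mpr ht.2
        have := ht.1
        nlinarith
      have hset : Prod.mk t ⁻¹' S
          = (MeasurableEquiv.toLp 2 (Fin k → ℝ)).symm.symm ⁻¹' (ball 0 (r*(1-t/h))) := by
        ext w
        simp [hSdef, mem_ball_zero_iff, ht.1, ht.2]
      rw [hset, MeasurePreserving.measure_preimage
        ((EuclideanSpace.volume_preserving_symm_measurableEquiv_toLp (Fin k)).symm)
        measurableSet_ball.nullMeasurableSet,
        Measure.addHaar_ball_of_pos _ _ hRpos, finrank_euclideanSpace_fin,
        Set.indicator_of_mem ht]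
    · rw [Set.indicator_of_notMem ht]
      have : Prod.mk t ⁻¹' S = ∅ := by
        ext w
        simp [hSdef, ht]
        intro h1 h2
        exact absurd ⟨h1, h2⟩ ht
      simp [this]
  calc ∫⁻ t, volume (Prod.mk t ⁻¹' S)
      = ∫⁻ t, (Set.Ioo 0 h).indicator (fun t => ENNReal.ofReal ((r*(1-t/h))^k) * ω) t := by
        simp only [hslice]
    _ = ∫⁻ t in Set.Ioo 0 h, ENNReal.ofReal ((r*(1-t/h))^k) * ω := by
        rw [lintegral_indicator measurableSet_Ioo]
    _ = (∫⁻ t in Set.Ioo 0 h, ENNReal.ofReal ((r*(1-t/h))^k)) * ω := by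
        rw [lintegral_mul_const]
        exact (((continuous_const.mul (continuous_const.sub (continuous_id.div_const h))).pow k).measurable).ennreal_ofReal
    _ = ENNReal.ofReal (r ^ k * h / (k+1)) * ω := by
        congr 1
        have hInt : IntegrableOn (fun t : ℝ => (r*(1-t/h))^k) (Set.Ioo 0 h) := by
          apply IntegrableOn.mono_set _ Set.Ioo_subset_Icc_self
          exact (((continuous_const.mul (continuous_const.sub (continuous_id.div_const h))).pow k)).integrableOn_Icc
        have hnn : 0 ≤ᵐ[volume.restrict (Set.Ioo 0 h)] fun t : ℝ => (r*(1-t/h))^k := by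
          rw [Filter.EventuallyLE, ae_restrict_iff' measurableSet_Ioo]
          filter_upwards with t ht
          have := (div_lt_one hh).mpr ht.2
          have : 0 ≤ r * (1 - t/h) := by nlinarith
          positivity
        rw [← ofReal_integral_eq_lintegral_ofReal hInt hnn]
        congr 1
        rw [← integral_Ioc_eq_integral_Ioo, ← intervalIntegral.integral_of_le hh.le]
        have H : ∀ t ∈ Set.uIcc (0:ℝ) h,
            HasDerivAt (fun t => -(h/((k+1)*r)) * (r*(1-t/h))^(k+1)) ((r*(1-t/h))^k) t := by
          intro t _
          have h1 : HasDerivAt (fun t : ℝ => r*(1-t/h)) (-(r/h)) t := by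
            simpa [div_eq_mul_inv] using (((hasDerivAt_id t).div_const h).const_sub 1).const_mul r
          have h2 := (h1.pow (k+1)).const_mul (-(h/((k+1)*r)))
          refine h2.congr_deriv ?_
          rw [Nat.add_sub_cancel]; push_cast
          field_simp
        rw [intervalIntegral.integral_eq_sub_of_hasDerivAt H
          ((((continuous_const.mul (continuous_const.sub (continuous_id.div_const h))).pow k)).intervalIntegrable 0 h)]
        rw [div_self hh.ne']
        field_simp
        rw [sub_zero, mul_div_assoc, div_self hh.ne', mul_one, sub_self, mul_zero]
        ring

lemma cone_volume (k : ℕ) {r h : ℝ} (hr : 0 < r) (hh : 0 < h)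
    {u : EuclideanSpace ℝ (Fin (k+1))} (hu : ‖u‖ = 1) :
    volume {q : EuclideanSpace ℝ (Fin (k+1)) |
        ⟪u, q⟫ ∈ Set.Ioo 0 h ∧ ‖q - ⟪u, q⟫ • u‖ < r * (1 - ⟪u, q⟫ / h)} =
      ENNReal.ofReal (r ^ k * h / (k+1)) *
        volume (ball (0 : EuclideanSpace ℝ (Fin k)) 1) := by
  -- get an orthonormal basis with `b 0 = u`
  obtain ⟨b, hb⟩ : ∃ b : OrthonormalBasis (Fin (k+1)) ℝ (EuclideanSpace ℝ (Fin (k+1))),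
      b 0 = u := by
    have hcard : Module.finrank ℝ (EuclideanSpace ℝ (Fin (k+1))) = Fintype.card (Fin (k+1)) := by
      simp [finrank_euclideanSpace]
    have hv : Orthonormal ℝ (({0} : Set (Fin (k+1))).restrict (fun _ => u)) := by
      constructor
      · intro i; exact hu
      · intro i j hij
        exact absurd (Subsingleton.elim i j) hij
    obtain ⟨b, hb⟩ := hv.exists_orthonormalBasis_extension_of_card_eq hcard
    exact ⟨b, hb 0 rfl⟩
  have hrepr_u : b.repr u = EuclideanSpace.single 0 1 := by
    rw [← hb]; exact b.repr_self 0
  have hpre : {q : EuclideanSpace ℝ (Fin (k+1)) |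
        ⟪u, q⟫ ∈ Set.Ioo 0 h ∧ ‖q - ⟪u, q⟫ • u‖ < r * (1 - ⟪u, q⟫ / h)}
      = b.repr ⁻¹' {q : EuclideanSpace ℝ (Fin (k+1)) |
        q 0 ∈ Set.Ioo 0 h ∧ ‖q - q 0 • EuclideanSpace.single 0 1‖ < r * (1 - q 0 / h)} := by
    ext q
    have e1 : (b.repr q) 0 = ⟪u, q⟫ := by
      rw [b.repr_apply_apply, hb]
    have e2 : ‖b.repr q - (b.repr q) 0 • EuclideanSpace.single 0 1‖
        = ‖q - ⟪u, q⟫ • u‖ := by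
      rw [e1, ← hrepr_u, ← _root_.map_smul, ← map_sub, b.repr.norm_map]
    simp only [Set.mem_preimage, Set.mem_setOf_eq, e1]
    rw [← e1, e2, e1]
  have hmeas : MeasurableSet {q : EuclideanSpace ℝ (Fin (k+1)) |
      q 0 ∈ Set.Ioo 0 h ∧ ‖q - q 0 • EuclideanSpace.single 0 1‖ < r * (1 - q 0 / h)} := by
    have hc : Continuous fun q : EuclideanSpace ℝ (Fin (k+1)) => q 0 :=
      (EuclideanSpace.proj (0 : Fin (k+1))).continuous
    have h1 : MeasurableSet {q : EuclideanSpace ℝ (Fin (k+1)) | q 0 ∈ Set.Ioo 0 h} :=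
      hc.measurable measurableSet_Ioo
    have h2 : MeasurableSet {q : EuclideanSpace ℝ (Fin (k+1)) |
        ‖q - q 0 • EuclideanSpace.single 0 1‖ < r * (1 - q 0 / h)} :=
      measurableSet_lt
        ((continuous_id.sub (hc.smul continuous_const)).norm.measurable)
        ((continuous_const.mul (continuous_const.sub (hc.div_const h))).measurable)
    exact h1.inter h2
  rw [hpre, b.measurePreserving_repr.measure_preimage hmeas.nullMeasurableSet,
    stdCone_volume k hr hh]

lemma dist_le_aux (k : ℕ) {Ω : Set (EuclideanSpace ℝ (Fin (k+1)))} (hconv : Convex ℝ Ω)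
    (hvol : volume Ω < ⊤) {x : EuclideanSpace ℝ (Fin (k+1))} {r : ℝ} (hr : 0 < r)
    (hball : ball x r ⊆ Ω) {p : EuclideanSpace ℝ (Fin (k+1))} (hp : p ∈ Ω) :
    dist p x ≤ (k+1) * ((volume (ball (0 : EuclideanSpace ℝ (Fin k)) 1)).toReal)⁻¹ *
      (r ^ k)⁻¹ * (volume Ω).toReal := by
  set ω := volume (ball (0 : EuclideanSpace ℝ (Fin k)) 1) with hωdef
  have hω0 : 0 < ω.toReal :=
    ENNReal.toReal_pos (measure_ball_pos volume 0 one_pos).ne' measure_ball_lt_top.ne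
  rcases eq_or_ne p x with rfl | hne
  · rw [dist_self]
    have : 0 ≤ (volume Ω).toReal := ENNReal.toReal_nonneg
    positivity
  · have hpx : p - x ≠ 0 := sub_ne_zero.mpr hne
    set h := ‖p - x‖ with hhdef
    have hh : 0 < h := norm_pos_iff.mpr hpx
    set u := ‖p - x‖⁻¹ • (p - x) with hudef
    have hu : ‖u‖ = 1 := norm_smul_inv_norm hpx
    have hhu : h • u = p - x := by
      rw [hudef, smul_smul, mul_inv_cancel₀ hh.ne', one_smul]
    -- the translated cone
    set C₀ : Set (EuclideanSpace ℝ (Fin (k+1))) :=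
      {q | ⟪u, q⟫ ∈ Set.Ioo 0 h ∧ ‖q - ⟪u, q⟫ • u‖ < r * (1 - ⟪u, q⟫ / h)} with hC₀def
    have hsub : (fun q => q - x) ⁻¹' C₀ ⊆ Ω := by
      intro q hq
      obtain ⟨⟨hc0, hch⟩, hw⟩ := hq
      set c := ⟪u, q - x⟫ with hcdef
      set s := c / h with hsdef
      have hs0 : 0 < s := div_pos hc0 hh
      have hs1 : s < 1 := (div_lt_one hh).mpr hch
      have h1s : (0:ℝ) < 1 - s := by linarith
      set w := (q - x) - c • u with hwdef
      have hcu : c • u = s • (p - x) := by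
        rw [← hhu, smul_smul (c/h) h u, div_mul_cancel₀ _ hh.ne']
      have hmem : x + (1-s)⁻¹ • w ∈ ball x r := by
        rw [mem_ball, dist_eq_norm, add_sub_cancel_left, norm_smul, Real.norm_eq_abs,
          abs_of_pos (inv_pos.mpr h1s)]
        have hwlt : ‖w‖ < r * (1 - s) := by
          have : r * (1 - c / h) = r * (1 - s) := by rw [hsdef]
          rw [← this]; exact hw
        calc (1-s)⁻¹ * ‖w‖ < (1-s)⁻¹ * (r * (1-s)) := by
              exact mul_lt_mul_of_pos_left hwlt (inv_pos.mpr h1s)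
          _ = r := by field_simp
      have key : q = (1-s) • (x + (1-s)⁻¹ • w) + s • p := by
        rw [smul_add, smul_smul, mul_inv_cancel₀ h1s.ne', one_smul, hwdef, hcu]
        module
      rw [key]
      exact hconv (hball hmem) hp (by linarith) hs0.le (by ring)
    have hvolC : volume ((fun q => q - x) ⁻¹' C₀) = ENNReal.ofReal (r ^ k * h / (k+1)) * ω := by
      have : (fun q : EuclideanSpace ℝ (Fin (k+1)) => q - x) = fun q => q + (-x) := by
        funext q; rw [sub_eq_add_neg]
      rw [this, measure_preimage_add_right, cone_volume k hr hh hu]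
    have hle : ENNReal.ofReal (r ^ k * h / (k+1)) * ω ≤ volume Ω := by
      rw [← hvolC]; exact measure_mono hsub
    -- extract the real inequality
    have hωne : ω ≠ 0 := (measure_ball_pos volume 0 one_pos).ne'
    have hωtop : ω ≠ ⊤ := measure_ball_lt_top.ne
    have hdiv : ENNReal.ofReal (r ^ k * h / (k+1)) ≤ volume Ω / ω :=
      (ENNReal.le_div_iff_mul_le (Or.inl hωne) (Or.inl hωtop)).mpr hle
    have hreal : r ^ k * h / (k+1) ≤ (volume Ω).toReal / ω.toReal := by
      have h1 : (ENNReal.ofReal (r ^ k * h / (k+1))).toReal = r ^ k * h / (k+1) := by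
        rw [ENNReal.toReal_ofReal]; positivity
      have h2 : volume Ω / ω ≠ ⊤ := by
        exact (ENNReal.div_lt_top hvol.ne hωne).ne
      calc r ^ k * h / (k+1) = (ENNReal.ofReal (r ^ k * h / (k+1))).toReal := h1.symm
        _ ≤ (volume Ω / ω).toReal := ENNReal.toReal_mono h2 hdiv
        _ = (volume Ω).toReal / ω.toReal := ENNReal.toReal_div _ _
    have hdist : dist p x = h := by rw [dist_eq_norm, hhdef]
    rw [hdist]
    have hk1 : (0:ℝ) < (k:ℝ) + 1 := by positivity
    have hrk : (0:ℝ) < r ^ k := by positivity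
    rw [div_le_div_iff₀ (by positivity) hω0] at hreal
    rw [show ((k:ℝ)+1) * (ω.toReal)⁻¹ * (r ^ k)⁻¹ * (volume Ω).toReal
        = (((k:ℝ)+1) * (volume Ω).toReal) / (ω.toReal * r ^ k) by rw [div_eq_mul_inv, mul_inv]; ring,
      le_div_iff₀ (by positivity)]
    nlinarith [hreal]

/-- a nonempty open convex set `Ω ⊆ ℝ^m` (`m ≥ 2`) of finite Lebesgue measure
is bounded, and `diam Ω ≤ 2 m ω_{m-1}⁻¹ ρ(Ω)^{1-m} |Ω|`. -/
theorem diam_le_of_convex (m : ℕ) (hm : 2 ≤ m)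
    (Ω : Set (EuclideanSpace ℝ (Fin m)))
    (hne : Ω.Nonempty) (hopen : IsOpen Ω) (hconv : Convex ℝ Ω)
    (hvol : volume Ω < ⊤) :
    Bornology.IsBounded Ω ∧
      diam Ω ≤ 2 * m * ((volume (ball (0 : EuclideanSpace ℝ (Fin (m - 1))) 1)).toReal)⁻¹ *
        (inradius Ω ^ (m - 1))⁻¹ * (volume Ω).toReal := by
  obtain ⟨k, rfl⟩ : ∃ k, m = k + 1 := ⟨m - 1, (Nat.succ_pred_eq_of_pos (by omega)).symm⟩
  simp only [Nat.add_sub_cancel]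
  set ω := volume (ball (0 : EuclideanSpace ℝ (Fin k)) 1) with hωdef
  have hω0 : 0 < ω.toReal :=
    ENNReal.toReal_pos (measure_ball_pos volume 0 one_pos).ne' measure_ball_lt_top.ne
  set S : Set ℝ := {r : ℝ | 0 < r ∧ ∃ x, ball x r ⊆ Ω} with hSdef
  -- S nonempty
  have hSne : S.Nonempty := by
    obtain ⟨x, hx⟩ := hne
    obtain ⟨ε, hε, hsub⟩ := Metric.isOpen_iff.mp hopen x hx
    exact ⟨ε, hε, x, hsub⟩
  -- S bounded above
  have hSbdd : BddAbove S := by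
    set ωm := volume (ball (0 : EuclideanSpace ℝ (Fin (k+1))) 1) with hωmdef
    have hωmne : ωm ≠ 0 := (measure_ball_pos volume 0 one_pos).ne'
    have hωmtop : ωm ≠ ⊤ := measure_ball_lt_top.ne
    refine ⟨max 1 ((volume Ω / ωm).toReal), ?_⟩
    rintro r ⟨hr, x, hsub⟩
    have hball : volume (ball x r) = ENNReal.ofReal (r ^ (k+1)) * ωm := by
      rw [Measure.addHaar_ball_of_pos _ _ hr, finrank_euclideanSpace_fin]
    have hle : ENNReal.ofReal (r ^ (k+1)) * ωm ≤ volume Ω := by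
      rw [← hball]; exact measure_mono hsub
    have hdiv : ENNReal.ofReal (r ^ (k+1)) ≤ volume Ω / ωm :=
      (ENNReal.le_div_iff_mul_le (Or.inl hωmne) (Or.inl hωmtop)).mpr hle
    have hK : r ^ (k+1) ≤ (volume Ω / ωm).toReal := by
      calc r ^ (k+1) = (ENNReal.ofReal (r ^ (k+1))).toReal := by
            rw [ENNReal.toReal_ofReal]; positivity
        _ ≤ (volume Ω / ωm).toReal :=
            ENNReal.toReal_mono (ENNReal.div_lt_top hvol.ne hωmne).ne hdiv
    rcases le_or_gt r 1 with h1 | h1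
    · exact le_max_of_le_left h1
    · refine le_max_of_le_right ?_
      calc r ≤ r ^ (k+1) := le_self_pow₀ h1.le (by omega)
        _ ≤ _ := hK
  set ρ := inradius Ω with hρdef
  have hρS : ∀ r ∈ S, r ≤ ρ := fun r hr => le_csSup hSbdd hr
  have hρ0 : 0 < ρ := lt_of_lt_of_le hSne.choose_spec.1 (hρS _ hSne.choose_spec)
  -- the distance bound for any r ∈ S with witness x
  have hD : ∀ r ∈ S, ∀ x, ball x r ⊆ Ω → ∀ p ∈ Ω,
      dist p x ≤ (k+1) * (ω.toReal)⁻¹ * (r ^ k)⁻¹ * (volume Ω).toReal := by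
    rintro r ⟨hr, -⟩ x hsub p hp
    exact dist_le_aux k hconv hvol hr hsub hp
  obtain ⟨r₀, hr₀S⟩ := id hSne
  obtain ⟨x₀, hx₀⟩ := hr₀S.2
  constructor
  · apply Bornology.IsBounded.subset (isBounded_closedBall (x := x₀)
      (r := (k+1) * (ω.toReal)⁻¹ * (r₀ ^ k)⁻¹ * (volume Ω).toReal))
    intro p hp
    exact mem_closedBall.mpr (hD r₀ hr₀S x₀ hx₀ p hp)
  · -- diam bound for each r ∈ S
    have hdiam : ∀ r ∈ S, diam Ω * r ^ k ≤ 2 * (k+1) * (ω.toReal)⁻¹ * (volume Ω).toReal := by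
      rintro r hrS
      obtain ⟨hr, x, hsub⟩ := hrS
      have hd : diam Ω ≤ 2 * ((k+1) * (ω.toReal)⁻¹ * (r ^ k)⁻¹ * (volume Ω).toReal) := by
        apply diam_le_of_forall_dist_le
        · have h1 : (0:ℝ) ≤ (k+1) * (ω.toReal)⁻¹ * (r ^ k)⁻¹ * (volume Ω).toReal := by
            have := ENNReal.toReal_nonneg (a := volume Ω); positivity
          linarith
        · intro p hp q hq
          calc dist p q ≤ dist p x + dist q x := dist_triangle_right p q x
            _ ≤ _ := by
                have h1 := hD r ⟨hr, x, hsub⟩ x hsub p hp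
                have h2 := hD r ⟨hr, x, hsub⟩ x hsub q hq
                linarith
      have hrk : (0:ℝ) < r ^ k := by positivity
      calc diam Ω * r ^ k
          ≤ 2 * ((k+1) * (ω.toReal)⁻¹ * (r ^ k)⁻¹ * (volume Ω).toReal) * r ^ k := by
            exact mul_le_mul_of_nonneg_right hd hrk.le
        _ = 2 * (k+1) * (ω.toReal)⁻¹ * (volume Ω).toReal * ((r ^ k)⁻¹ * r ^ k) := by ring
        _ = 2 * (k+1) * (ω.toReal)⁻¹ * (volume Ω).toReal := by
            rw [inv_mul_cancel₀ hrk.ne', mul_one]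
    -- pass to the supremum
    have hlim : diam Ω * ρ ^ k ≤ 2 * (k+1) * (ω.toReal)⁻¹ * (volume Ω).toReal := by
      obtain ⟨v, hmono, htend, hmem⟩ := exists_seq_tendsto_sSup hSne hSbdd
      have htend' : Filter.Tendsto (fun n => diam Ω * (v n) ^ k) Filter.atTop
          (nhds (diam Ω * ρ ^ k)) := by
        exact ((continuous_const.mul ((continuous_pow k).comp continuous_id)).tendsto ρ).comp htend
      exact le_of_tendsto htend' (Filter.Eventually.of_forall fun n => hdiam _ (hmem n))
    have hρk : (0:ℝ) < ρ ^ k := by positivity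
    have := (le_div_iff₀ hρk).mpr hlim
    calc diam Ω ≤ 2 * (k+1) * (ω.toReal)⁻¹ * (volume Ω).toReal / ρ ^ k := this
      _ = 2 * (↑(k+1)) * (ω.toReal)⁻¹ * (ρ ^ k)⁻¹ * (volume Ω).toReal := by
          rw [div_eq_mul_inv]; push_cast; ring
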